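/- Let θ be irrational and M ≥ 1. Then the incoming and outgoing partitions together satisfy κ_θ = 1: writing P^in_θ(M) = (a₁,…,a_k) and P^out_θ(M) = (b₁,…,b_l), one has ∑_{i=1}^k ⌈aᵢθ⌉ − ∑_{j=1}^l ⌊bⱼθ⌋ = 1. -/

import Mathlib

open scoped Classical
open Finset

/-- The next (largest) entry of the incoming partition: the largest `a ∈ {1,…,M}`
such that `⌈aθ⌉/a < ⌈a'θ⌉/a'` for all `a' ∈ {1,…,a−1}`. -/
noncomputable def pinStep (θ : ℝ) (M : ℕ) : ℕ :=
  (((Finset.Icc 1 M).filter (fun a : ℕ => ∀ a' ∈ Finset.Ico 1 a,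
      ((⌈(a : ℝ) * θ⌉ : ℤ) : ℝ) / (a : ℝ) < ((⌈(a' : ℝ) * θ⌉ : ℤ) : ℝ) / (a' : ℝ))).max).unbotD 0

/-- Fuel-based recursion computing the incoming partition `P^in_θ(M)`. -/
noncomputable def pinListAux (θ : ℝ) : ℕ → ℕ → List ℕ
  | 0, _ => []
  | fuel + 1, M =>
      if M = 0 then [] else pinStep θ M :: pinListAux θ fuel (M - pinStep θ M)

/-- The incoming partition `P^in_θ(M)`, listed in the order produced by the recursion
(which is nonincreasing). -/
noncomputable def pinList (θ : ℝ) (M : ℕ) : List ℕ := pinListAux θ M M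

/-- The outgoing partition `P^out_θ(M) := P^in_{−θ}(M)`. -/
noncomputable def poutList (θ : ℝ) (M : ℕ) : List ℕ := pinList (-θ) M

namespace KappaAux

noncomputable def recSet (θ : ℝ) (M : ℕ) : Finset ℕ :=
  (Finset.Icc 1 M).filter (fun a : ℕ => ∀ a' ∈ Finset.Ico 1 a,
      ((⌈(a : ℝ) * θ⌉ : ℤ) : ℝ) / (a : ℝ) < ((⌈(a' : ℝ) * θ⌉ : ℤ) : ℝ) / (a' : ℝ))

lemma one_mem_recSet (θ : ℝ) {M : ℕ} (hM : 1 ≤ M) : 1 ∈ recSet θ M := by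
  simp only [recSet, Finset.mem_filter, Finset.mem_Icc, Finset.mem_Ico]
  refine ⟨⟨le_refl 1, hM⟩, ?_⟩
  intro a' ha'
  omega

lemma recSet_nonempty (θ : ℝ) {M : ℕ} (hM : 1 ≤ M) : (recSet θ M).Nonempty :=
  ⟨1, one_mem_recSet θ hM⟩

lemma pinStep_eq_max' (θ : ℝ) {M : ℕ} (hM : 1 ≤ M) :
    pinStep θ M = (recSet θ M).max' (recSet_nonempty θ hM) := by
  have h := Finset.coe_max' (recSet_nonempty θ hM)
  unfold pinStep
  rw [show (((Finset.Icc 1 M).filter (fun a : ℕ => ∀ a' ∈ Finset.Ico 1 a,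
      ((⌈(a : ℝ) * θ⌉ : ℤ) : ℝ) / (a : ℝ) < ((⌈(a' : ℝ) * θ⌉ : ℤ) : ℝ) / (a' : ℝ))).max)
      = (recSet θ M).max from rfl, ← h]
  rfl

lemma pinStep_mem (θ : ℝ) {M : ℕ} (hM : 1 ≤ M) : pinStep θ M ∈ recSet θ M := by
  rw [pinStep_eq_max' θ hM]; exact Finset.max'_mem _ _

lemma pinStep_le (θ : ℝ) {M : ℕ} (hM : 1 ≤ M) : pinStep θ M ≤ M := by
  have := pinStep_mem θ hM
  simp only [recSet, Finset.mem_filter, Finset.mem_Icc] at this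
  exact this.1.2

lemma one_le_pinStep (θ : ℝ) {M : ℕ} (hM : 1 ≤ M) : 1 ≤ pinStep θ M := by
  have := pinStep_mem θ hM
  simp only [recSet, Finset.mem_filter, Finset.mem_Icc] at this
  exact this.1.1

/-- The greedy step minimizes `⌈nθ⌉/n` over `[1, M]`. -/
lemma pinStep_min (θ : ℝ) {M : ℕ} (hM : 1 ≤ M) :
    ∀ n, 1 ≤ n → n ≤ M →
      ((⌈((pinStep θ M : ℕ) : ℝ) * θ⌉ : ℤ) : ℝ) / ((pinStep θ M : ℕ) : ℝ)
        ≤ ((⌈(n : ℝ) * θ⌉ : ℤ) : ℝ) / (n : ℝ) := by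
  intro n
  induction n using Nat.strong_induction_on with
  | _ n ih =>
    intro hn1 hnM
    by_cases hmem : n ∈ recSet θ M
    · have hle : n ≤ pinStep θ M := by
        rw [pinStep_eq_max' θ hM]; exact Finset.le_max' _ n hmem
      rcases lt_or_eq_of_le hle with hlt | heq
      · have hrec := pinStep_mem θ hM
        simp only [recSet, Finset.mem_filter] at hrec
        exact le_of_lt (hrec.2 n (by simp [Finset.mem_Ico, hn1, hlt]))
      · rw [heq]
    · simp only [recSet, Finset.mem_filter, Finset.mem_Icc, not_and, not_forall] at hmem
      obtain ⟨n', hn', hle⟩ := hmem ⟨hn1, hnM⟩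
      simp only [Finset.mem_Ico] at hn'
      push_neg at hle
      exact le_trans (ih n' hn'.2 hn'.1 (le_trans (le_of_lt hn'.2) hnM)) hle

/-- Ceil additivity at the greedy step. -/
lemma step_ceil_add (θ : ℝ) (hθ : Irrational θ) {a b : ℕ} (ha : 1 ≤ a) (hb : 1 ≤ b)
    (h : ((a + b : ℕ) : ℤ) * ⌈(a : ℝ) * θ⌉ ≤ (a : ℤ) * ⌈((a + b : ℕ) : ℝ) * θ⌉) :
    ⌈(a : ℝ) * θ⌉ + ⌈(b : ℝ) * θ⌉ = ⌈((a + b : ℕ) : ℝ) * θ⌉ := by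
  set ca := ⌈(a : ℝ) * θ⌉ with hca
  set cb := ⌈(b : ℝ) * θ⌉ with hcb
  set cm := ⌈((a + b : ℕ) : ℝ) * θ⌉ with hcm
  have hirr_a : Irrational ((a : ℝ) * θ) := hθ.natCast_mul (by omega)
  have ha_strict : (a : ℝ) * θ < (ca : ℝ) :=
    lt_of_le_of_ne (Int.le_ceil _) (fun hc => (hirr_a.ne_int ca) hc)
  have hb_lt : (cb : ℝ) < (b : ℝ) * θ + 1 := Int.ceil_lt_add_one _
  have ha_lt : (ca : ℝ) < (a : ℝ) * θ + 1 := Int.ceil_lt_add_one _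
  have hm_le : ((a + b : ℕ) : ℝ) * θ ≤ (cm : ℝ) := Int.le_ceil _
  have hsplit : ((a + b : ℕ) : ℝ) * θ = (a : ℝ) * θ + (b : ℝ) * θ := by push_cast; ring
  -- lower bound : cm ≤ ca + cb
  have h1 : cm ≤ ca + cb := by
    rw [hcm, hsplit]
    exact le_trans (Int.ceil_add_le _ _) (le_refl _)
  -- upper bound : ca + cb ≤ cm + 1
  have h2 : ca + cb ≤ cm + 1 := by
    have : ((ca : ℝ) + cb) < (cm : ℝ) + 2 := by
      rw [hsplit] at hm_le; linarith
    have := (by exact_mod_cast this : (ca + cb : ℤ) < cm + 2)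
    omega
  -- exclude ca + cb = cm + 1
  rcases eq_or_lt_of_le h1 with heq | hlt
  · omega
  exfalso
  have hcm_eq : cm = ca + cb - 1 := by omega
  -- from h : (a+b) * ca ≤ a * cm = a*(ca+cb-1)
  have h' : (b : ℤ) * ca + a ≤ a * cb := by
    rw [hcm_eq] at h
    push_cast at h
    nlinarith [h]
  have h'' : ((b : ℝ)) * ca + a ≤ (a : ℝ) * cb := by exact_mod_cast h'
  have hbpos : (0 : ℝ) < (b : ℝ) := by exact_mod_cast hb
  have hapos : (0 : ℝ) < (a : ℝ) := by exact_mod_cast ha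
  nlinarith [mul_lt_mul_of_pos_left ha_strict hbpos, mul_lt_mul_of_pos_left hb_lt hapos]

lemma pinListAux_sum (θ : ℝ) (hθ : Irrational θ) :
    ∀ fuel M : ℕ, M ≤ fuel →
      ((pinListAux θ fuel M).map (fun a : ℕ => ⌈(a : ℝ) * θ⌉)).sum = ⌈(M : ℝ) * θ⌉ := by
  intro fuel
  induction fuel with
  | zero =>
      intro M hM
      have : M = 0 := Nat.le_zero.mp hM
      subst this
      simp [pinListAux]
  | succ n ih =>
      intro M hM
      by_cases hM0 : M = 0
      · subst hM0; simp [pinListAux]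
      · have hM1 : 1 ≤ M := Nat.one_le_iff_ne_zero.mpr hM0
        set a := pinStep θ M with ha
        have ha1 : 1 ≤ a := one_le_pinStep θ hM1
        have haM : a ≤ M := pinStep_le θ hM1
        rw [pinListAux]
        simp only [hM0, if_false, List.map_cons, List.sum_cons]
        rw [ih (M - a) (by omega)]
        rcases eq_or_lt_of_le haM with heq | hlt
        · rw [heq]
          simp only [Nat.sub_self, Nat.cast_zero, zero_mul, Int.ceil_zero, add_zero]
          rw [← ha, heq]
        · -- a < M, use step additivity with b = M - a
          have hb1 : 1 ≤ M - a := by omega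
          have hab : a + (M - a) = M := by omega
          have hmin := pinStep_min θ hM1 M hM1 (le_refl M)
          -- convert the div inequality to the integer inequality
          have hdiv : ((⌈(a : ℝ) * θ⌉ : ℤ) : ℝ) / (a : ℝ)
              ≤ ((⌈(M : ℝ) * θ⌉ : ℤ) : ℝ) / (M : ℝ) := hmin
          have hapos : (0 : ℝ) < (a : ℝ) := by exact_mod_cast ha1
          have hMpos : (0 : ℝ) < (M : ℝ) := by exact_mod_cast hM1
          rw [div_le_div_iff₀ hapos hMpos] at hdiv
          have hint : ((M : ℕ) : ℤ) * ⌈(a : ℝ) * θ⌉ ≤ (a : ℤ) * ⌈((M : ℕ) : ℝ) * θ⌉ := by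
            have : ((⌈(a : ℝ) * θ⌉ : ℤ) : ℝ) * M ≤ ((⌈(M : ℝ) * θ⌉ : ℤ) : ℝ) * a := hdiv
            exact_mod_cast (by linarith : ((M : ℝ)) * ((⌈(a : ℝ) * θ⌉ : ℤ) : ℝ)
              ≤ ((a : ℝ)) * ((⌈(M : ℝ) * θ⌉ : ℤ) : ℝ))
          have := step_ceil_add θ hθ ha1 hb1 (by rw [hab]; exact_mod_cast hint)
          rw [hab] at this
          linarith [this]

lemma pinList_sum (θ : ℝ) (hθ : Irrational θ) (M : ℕ) :
    ((pinList θ M).map (fun a : ℕ => ⌈(a : ℝ) * θ⌉)).sum = ⌈(M : ℝ) * θ⌉ :=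
  pinListAux_sum θ hθ M M (le_refl M)

end KappaAux

lemma neg_map_sum (L : List ℕ) (f : ℕ → ℤ) :
    (L.map (fun a => - f a)).sum = -((L.map f).sum) := by
  induction L with
  | nil => simp
  | cons x xs ih => simp [ih]; ring

/-- `κ_θ = 1` for the pair (incoming partition, outgoing partition):
`∑ᵢ ⌈aᵢθ⌉ − ∑ⱼ ⌊bⱼθ⌋ = 1`. -/
theorem kappa_pin_pout (θ : ℝ) (hθ : Irrational θ) (M : ℕ) (hM : 1 ≤ M) :
    ((pinList θ M).map (fun a => ⌈(a : ℝ) * θ⌉)).sum -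
      ((poutList θ M).map (fun b => ⌊(b : ℝ) * θ⌋)).sum = 1 := by
  have hcast : ∀ L : List ℕ, (L.flatMap fun a => ([((a : ℕ) : ℝ)] : List ℝ))
      = L.map (fun a : ℕ => ((a : ℕ) : ℝ)) := by
    intro L; induction L with
    | nil => simp
    | cons x xs ih => simp [ih]
  have hconv1 : ((pinList θ M).map (fun a => ⌈(a : ℝ) * θ⌉)).sum
      = ((pinList θ M).map (fun a : ℕ => ⌈(a : ℝ) * θ⌉)).sum := by
    show (List.map _ ((pinList θ M).flatMap fun a => [((a : ℕ) : ℝ)])).sum = _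
    rw [hcast, List.map_map]
    rfl
  have hconv2 : ((poutList θ M).map (fun b => ⌊(b : ℝ) * θ⌋)).sum
      = ((poutList θ M).map (fun b : ℕ => ⌊(b : ℝ) * θ⌋)).sum := by
    show (List.map _ ((poutList θ M).flatMap fun a => [((a : ℕ) : ℝ)])).sum = _
    rw [hcast, List.map_map]
    rfl
  rw [hconv1, hconv2]
  have h1 : ((pinList θ M).map (fun a : ℕ => ⌈(a : ℝ) * θ⌉)).sum = ⌈(M : ℝ) * θ⌉ :=
    KappaAux.pinList_sum θ hθ M
  have hneg : Irrational (-θ) := hθ.neg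
  have h2 : ((pinList (-θ) M).map (fun a : ℕ => ⌈(a : ℝ) * (-θ)⌉)).sum = ⌈(M : ℝ) * (-θ)⌉ :=
    KappaAux.pinList_sum (-θ) hneg M
  have hfun : (fun b : ℕ => ⌊(b : ℝ) * θ⌋) = (fun b : ℕ => -⌈(b : ℝ) * (-θ)⌉) := by
    funext b
    rw [show (b : ℝ) * (-θ) = -((b : ℝ) * θ) by ring, Int.ceil_neg]
    ring
  have h3 : ((poutList θ M).map (fun b : ℕ => ⌊(b : ℝ) * θ⌋)).sum = ⌊(M : ℝ) * θ⌋ := by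
    unfold poutList
    rw [hfun, neg_map_sum, h2]
    rw [show (M : ℝ) * (-θ) = -((M : ℝ) * θ) by ring, Int.ceil_neg]
    ring
  rw [h1, h3]
  -- ⌈Mθ⌉ = ⌊Mθ⌋ + 1 since Mθ is irrational
  have hirr : Irrational ((M : ℝ) * θ) := hθ.natCast_mul (by omega)
  set x := (M : ℝ) * θ
  have hfl : ((⌊x⌋ : ℤ) : ℝ) < x := lt_of_le_of_ne (Int.floor_le x) (fun h => (hirr.ne_int ⌊x⌋) h.symm)
  have hcl : x < ((⌊x⌋ : ℤ) : ℝ) + 1 := Int.lt_floor_add_one x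
  have hub : ⌈x⌉ ≤ ⌊x⌋ + 1 := by
    apply Int.ceil_le.mpr
    push_cast
    linarith
  have hlb : ⌊x⌋ < ⌈x⌉ := by
    have : ((⌊x⌋ : ℤ) : ℝ) < ((⌈x⌉ : ℤ) : ℝ) := lt_of_lt_of_le hfl (Int.le_ceil x)
    exact_mod_cast this
  omega
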